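/- Let C and D be pretriangulated categories (each equipped with a shift by ℤ), and let F : C ⥤ D be an exact (triangulated) functor which admits a left adjoint G : D ⥤ C and a right adjoint H : D ⥤ C. Suppose Ω is a spanning class of C such that for all objects ω, ω' ∈ Ω and all integers i, the map Hom_C(ω, ω'⟦i⟧) → Hom_D(F ω, (F ω')⟦i⟧) induced by F (using the commutation isomorphism F(ω'⟦i⟧) ≅ (F ω')⟦i⟧) is bijective. Then F is fully faithful. -/

import Mathlib

open CategoryTheory Limits Pretriangulated Category

section BOBAux

variable {C : Type*} {D : Type*} [Category C] [Category D]

private lemma bob_bij_postcomp {x y z : C} (u : y ⟶ z) [IsIso u] :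
    Function.Bijective (fun f : x ⟶ y => f ≫ u) :=
  ⟨fun a b h => by simpa using h =≫ inv u, fun g => ⟨g ≫ inv u, by simp⟩⟩

private lemma bob_bij_precomp {x y z : C} (u : x ⟶ y) [IsIso u] :
    Function.Bijective (fun f : y ⟶ z => u ≫ f) :=
  ⟨fun a b h => by simpa using inv u ≫= h, fun g => ⟨inv u ≫ g, by simp⟩⟩

private lemma bob_aux_iso (F : C ⥤ D) {x y x' y' : C} (e : x ≅ x') (e' : y ≅ y')
    (h : Function.Bijective (fun f : x ⟶ y => F.map f)) :
    Function.Bijective (fun f : x' ⟶ y' => F.map f) := by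
  have key : (fun f : x' ⟶ y' => F.map f)
      = ⇑((F.mapIso e).homCongr (F.mapIso e')) ∘ (fun f : x ⟶ y => F.map f)
        ∘ ⇑(e.homCongr e').symm := by
    funext f
    simp [Iso.homCongr]
  rw [key]
  exact ((F.mapIso e).homCongr (F.mapIso e')).bijective.comp
    (h.comp (e.homCongr e').symm.bijective)

private lemma bob_aux_shift [HasShift C ℤ] [HasShift D ℤ] (F : C ⥤ D) [F.CommShift ℤ]
    {x y : C} (h : Function.Bijective (fun f : x ⟶ y => F.map f)) (n : ℤ) :
    Function.Bijective (fun f : x⟦n⟧ ⟶ y⟦n⟧ => F.map f) := by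
  have hσ : Function.Bijective (fun g : x ⟶ y => (shiftFunctor C n).map g) :=
    ((Functor.FullyFaithful.ofFullyFaithful (shiftFunctor C n)).homEquiv
      (X := x) (Y := y)).bijective
  rw [← Function.Bijective.of_comp_iff _ hσ]
  have key : (fun f : x⟦n⟧ ⟶ y⟦n⟧ => F.map f) ∘ (fun g : x ⟶ y => (shiftFunctor C n).map g)
      = ⇑((((F.commShiftIso n)).app x).symm.homCongr (((F.commShiftIso n)).app y).symm)
        ∘ (fun g : F.obj x ⟶ F.obj y => (shiftFunctor D n).map g)
        ∘ (fun f : x ⟶ y => F.map f) := by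
    funext g
    have hnat := NatTrans.naturality (F.commShiftIso n).hom g
    dsimp [Iso.homCongr] at hnat ⊢
    rw [← assoc, ← hnat, assoc]
    simp
  rw [key]
  exact ((((F.commShiftIso n)).app x).symm.homCongr
      (((F.commShiftIso n)).app y).symm).bijective.comp
    (((Functor.FullyFaithful.ofFullyFaithful (shiftFunctor D n)).homEquiv
        (X := F.obj x) (Y := F.obj y)).bijective.comp h)

variable [Preadditive C] [HasZeroObject C] [HasShift C ℤ]
  [∀ n : ℤ, (shiftFunctor C n).Additive] [Pretriangulated C]

private lemma bob_isIso_of_postcomp_bij (S : Set C)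
    (hSshift : ∀ s ∈ S, ∀ n : ℤ, (s⟦n⟧ : C) ∈ S)
    (hS : ∀ a : C, (∀ s ∈ S, ∀ f : s ⟶ a, f = 0) → IsZero a)
    {X Y : C} (u : X ⟶ Y)
    (h : ∀ s ∈ S, Function.Bijective (fun f : s ⟶ X => f ≫ u)) :
    IsIso u := by
  obtain ⟨Z, v, w, hT⟩ := distinguished_cocone_triangle u
  have hZ : IsZero Z := by
    refine hS Z (fun s hs f => ?_)
    have h31 := comp_distTriang_mor_zero₃₁ _ hT
    change w ≫ (shiftFunctor C (1 : ℤ)).map u = 0 at h31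
    -- Step 1 : f ≫ w = 0
    have hfw : f ≫ w = 0 := by
      set e := (shiftEquiv C (1 : ℤ)).counitIso.app s with he
      obtain ⟨g₀, hg₀⟩ := (shiftFunctor C (1 : ℤ)).map_surjective (e.hom ≫ f ≫ w)
      have hg₀u : g₀ ≫ u = 0 := by
        apply (shiftFunctor C (1 : ℤ)).map_injective
        rw [Functor.map_comp, hg₀, Functor.map_zero]
        exact (assoc _ _ _).trans ((congrArg (e.hom ≫ ·) ((assoc f w _).trans
          ((congrArg (f ≫ ·) h31).trans comp_zero))).trans comp_zero)
      have : g₀ = 0 := by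
        apply (h _ (hSshift s hs (-1))).1
        exact hg₀u.trans zero_comp.symm
      rw [this, Functor.map_zero] at hg₀
      have := hg₀.symm
      rwa [← cancel_epi e.hom, comp_zero]
    have h12 := comp_distTriang_mor_zero₁₂ _ hT
    change u ≫ v = 0 at h12
    obtain ⟨g, hg⟩ := Triangle.coyoneda_exact₃ _ hT f hfw
    change f = g ≫ v at hg
    obtain ⟨g', hg'⟩ := (h s hs).2 g
    dsimp at hg'
    rw [hg, ← hg']
    exact (assoc _ _ _).trans ((congrArg (g' ≫ ·) h12).trans comp_zero)
  exact (Triangle.isZero₃_iff_isIso₁ _ hT).1 hZ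

private lemma bob_isIso_of_precomp_bij (S : Set C)
    (hSshift : ∀ s ∈ S, ∀ n : ℤ, (s⟦n⟧ : C) ∈ S)
    (hS : ∀ a : C, (∀ s ∈ S, ∀ f : a ⟶ s, f = 0) → IsZero a)
    {X Y : C} (u : X ⟶ Y)
    (h : ∀ s ∈ S, Function.Bijective (fun f : Y ⟶ s => u ≫ f)) :
    IsIso u := by
  obtain ⟨Z, v, w, hT⟩ := distinguished_cocone_triangle u
  have hZ : IsZero Z := by
    refine hS Z (fun s hs f => ?_)
    have h31 := comp_distTriang_mor_zero₃₁ _ hT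
    change w ≫ (shiftFunctor C (1 : ℤ)).map u = 0 at h31
    have h12 := comp_distTriang_mor_zero₁₂ _ hT
    change u ≫ v = 0 at h12
    have hvf : v ≫ f = 0 := by
      apply (h s hs).1
      dsimp
      rw [← assoc, h12, zero_comp, comp_zero]
    obtain ⟨g, hg⟩ := Triangle.yoneda_exact₃ _ hT f hvf
    change f = w ≫ g at hg
    set e := (shiftEquiv C (1 : ℤ)).counitIso.app s with he
    obtain ⟨g₀, hg₀⟩ := (shiftFunctor C (1 : ℤ)).map_surjective (g ≫ e.inv)
    obtain ⟨h₀, hh₀⟩ := (h _ (hSshift s hs (-1))).2 g₀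
    dsimp at hh₀
    have hgeq : g = (shiftFunctor C (1 : ℤ)).map u ≫ ((shiftFunctor C (1 : ℤ)).map h₀ ≫ e.hom) := by
      have h1 : (shiftFunctor C (1 : ℤ)).map u ≫ (shiftFunctor C (1 : ℤ)).map h₀ = g ≫ e.inv := by
        rw [← Functor.map_comp, hh₀]
        exact hg₀
      exact ((assoc _ _ _).symm.trans ((congrArg (· ≫ e.hom) h1).trans ((assoc _ _ _).trans
        ((congrArg (g ≫ ·) e.inv_hom_id).trans (comp_id g))))).symm
    rw [hg, hgeq, ← assoc, h31, zero_comp]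
  exact (Triangle.isZero₃_iff_isIso₁ _ hT).1 hZ

end BOBAux

/-- **Bridgeland's spanning class criterion for fully faithfulness.**
Let `C` and `D` be pretriangulated categories and `F : C ⥤ D` an exact (triangulated)
functor admitting a left adjoint `G` and a right adjoint `H`. If `Ω` is a spanning class
of `C` such that for all `ω, ω' ∈ Ω` and all `i : ℤ` the natural map
`Hom (ω, ω'⟦i⟧) → Hom (F ω, (F ω')⟦i⟧)` induced by `F` is bijective, then `F` is fully
faithful. -/
theorem bondal_orlov_bridgeland_spanning_class_criterion
    {C : Type*} {D : Type*} [Category C] [Category D]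
    [Preadditive C] [Preadditive D] [HasZeroObject C] [HasZeroObject D]
    [HasShift C ℤ] [HasShift D ℤ]
    [∀ (n : ℤ), (CategoryTheory.shiftFunctor C n).Additive]
    [∀ (n : ℤ), (CategoryTheory.shiftFunctor D n).Additive]
    [Pretriangulated C] [Pretriangulated D]
    (F : C ⥤ D) [F.CommShift ℤ] [F.IsTriangulated]
    (G H : D ⥤ C) (adjG : G ⊣ F) (adjH : F ⊣ H)
    (Ω : Set C)
    (hΩ₁ : ∀ (a : C), (∀ ω ∈ Ω, ∀ (i : ℤ) (f : ω⟦i⟧ ⟶ a), f = 0) → IsZero a)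
    (hΩ₂ : ∀ (a : C), (∀ ω ∈ Ω, ∀ (i : ℤ) (f : a ⟶ ω⟦i⟧), f = 0) → IsZero a)
    (hbij : ∀ ω ∈ Ω, ∀ ω' ∈ Ω, ∀ (i : ℤ),
      Function.Bijective (fun f : ω ⟶ ω'⟦i⟧ =>
        F.map f ≫ (F.commShiftIso i).hom.app ω')) :
    F.Full ∧ F.Faithful := by
  set S : Set C := {t | ∃ ω ∈ Ω, ∃ j : ℤ, Nonempty ((ω⟦j⟧ : C) ≅ t)} with hSdef
  have hmemS : ∀ ω ∈ Ω, ∀ j : ℤ, (ω⟦j⟧ : C) ∈ S := fun ω hω j => ⟨ω, hω, j, ⟨Iso.refl _⟩⟩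
  have hSshift : ∀ s ∈ S, ∀ n : ℤ, (s⟦n⟧ : C) ∈ S := by
    rintro s ⟨ω, hω, j, ⟨e⟩⟩ n
    exact ⟨ω, hω, j + n, ⟨(shiftFunctorAdd C j n).app ω ≪≫ (shiftFunctor C n).mapIso e⟩⟩
  have hS₁ : ∀ a : C, (∀ s ∈ S, ∀ f : s ⟶ a, f = 0) → IsZero a :=
    fun a ha => hΩ₁ a (fun ω hω i f => ha _ (hmemS ω hω i) f)
  have hS₂ : ∀ a : C, (∀ s ∈ S, ∀ f : a ⟶ s, f = 0) → IsZero a :=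
    fun a ha => hΩ₂ a (fun ω hω i f => ha _ (hmemS ω hω i) f)
  -- base case of the bijectivity of `F.map`
  have hbase : ∀ ω ∈ Ω, ∀ ω' ∈ Ω, ∀ i : ℤ,
      Function.Bijective (fun f : ω ⟶ (ω'⟦i⟧ : C) => F.map f) := by
    intro ω hω ω' hω' i
    have h1 := hbij ω hω ω' hω' i
    have key : (fun f : ω ⟶ (ω'⟦i⟧ : C) => F.map f)
        = (fun g : F.obj ω ⟶ (F.obj ω')⟦i⟧ => g ≫ (F.commShiftIso i).inv.app ω')
          ∘ (fun f : ω ⟶ (ω'⟦i⟧ : C) => F.map f ≫ (F.commShiftIso i).hom.app ω') := by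
      funext f
      simp
    rw [key]
    have : IsIso ((F.commShiftIso i).inv.app ω') := inferInstance
    exact (bob_bij_postcomp ((F.commShiftIso i).inv.app ω')).comp h1
  -- bijectivity of `F.map` on `S × S`
  have hPS : ∀ s ∈ S, ∀ t ∈ S, Function.Bijective (fun f : s ⟶ t => F.map f) := by
    rintro s ⟨ω, hω, j, ⟨e⟩⟩ t ⟨ω', hω', i, ⟨e'⟩⟩
    refine bob_aux_iso F e e' ?_
    refine bob_aux_iso F (Iso.refl _)
      (((shiftFunctorAdd' C (i - j) j i (by ring)).app ω').symm) ?_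
    exact bob_aux_shift F (hbase ω hω ω' hω' (i - j)) j
  -- translation through the adjunctions
  have hUnit : ∀ (x b : C), (fun f : x ⟶ b => f ≫ adjH.unit.app b)
      = ⇑(adjH.homEquiv x (F.obj b)) ∘ (fun f : x ⟶ b => F.map f) := by
    intro x b
    funext f
    have := adjH.unit.naturality f
    dsimp at this ⊢
    rw [Adjunction.homEquiv_unit]
    exact this
  have hCounit : ∀ (x y : C), (fun f : x ⟶ y => adjG.counit.app x ≫ f)
      = ⇑(adjG.homEquiv (F.obj x) y).symm ∘ (fun f : x ⟶ y => F.map f) := by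
    intro x y
    funext f
    have := adjG.counit.naturality f
    dsimp at this ⊢
    rw [Adjunction.homEquiv_counit]
    exact this.symm
  -- if `F.map` is bijective from every object of `S` to `b`, it is bijective from
  -- every object to `b`
  have stepUnit : ∀ b : C, (∀ s ∈ S, Function.Bijective (fun f : s ⟶ b => F.map f)) →
      ∀ x : C, Function.Bijective (fun f : x ⟶ b => F.map f) := by
    intro b hb x
    have hiso : IsIso (adjH.unit.app b) := by
      refine bob_isIso_of_postcomp_bij S hSshift hS₁ (adjH.unit.app b) ?_
      intro s hs
      show Function.Bijective (fun f : s ⟶ b => f ≫ adjH.unit.app b)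
      rw [hUnit s b]
      exact (adjH.homEquiv s (F.obj b)).bijective.comp (hb s hs)
    have h2 : Function.Bijective (fun f : x ⟶ b => f ≫ adjH.unit.app b) :=
      bob_bij_postcomp (adjH.unit.app b)
    have key : (fun f : x ⟶ b => F.map f)
        = ⇑(adjH.homEquiv x (F.obj b)).symm ∘ (fun f : x ⟶ b => f ≫ adjH.unit.app b) := by
      rw [hUnit x b]
      funext f
      simp
    rw [key]
    exact (adjH.homEquiv x (F.obj b)).symm.bijective.comp h2
  -- if `F.map` is bijective from `x` to every object of `S`, it is bijective from
  -- `x` to every object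
  have stepCounit : ∀ x : C, (∀ s ∈ S, Function.Bijective (fun f : x ⟶ s => F.map f)) →
      ∀ y : C, Function.Bijective (fun f : x ⟶ y => F.map f) := by
    intro x hx y
    have hiso : IsIso (adjG.counit.app x) := by
      refine bob_isIso_of_precomp_bij S hSshift hS₂ (adjG.counit.app x) ?_
      intro s hs
      show Function.Bijective (fun f : x ⟶ s => adjG.counit.app x ≫ f)
      rw [hCounit x s]
      exact (adjG.homEquiv (F.obj x) s).symm.bijective.comp (hx s hs)
    have h2 : Function.Bijective (fun f : x ⟶ y => adjG.counit.app x ≫ f) :=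
      bob_bij_precomp (adjG.counit.app x)
    have key : (fun f : x ⟶ y => F.map f)
        = ⇑(adjG.homEquiv (F.obj x) y) ∘ (fun f : x ⟶ y => adjG.counit.app x ≫ f) := by
      rw [hCounit x y]
      funext f
      simp
    rw [key]
    exact (adjG.homEquiv (F.obj x) y).bijective.comp h2
  have hall : ∀ x y : C, Function.Bijective (fun f : x ⟶ y => F.map f) := by
    intro x y
    refine stepUnit y (fun s hs => ?_) x
    exact stepCounit s (fun t ht => hPS s hs t ht) y
  exact ⟨⟨fun {X Y} f => (hall X Y).2 f⟩, ⟨fun {X Y} {f g} h => (hall X Y).1 h⟩⟩
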